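/- Let T1 and T2 be trees on the same label set 𝒳. If there is an LPR sequence L = (x1, …, xk) turning T1 into T2, then for any i ∈ [k] there is an LPR sequence L' = (x1', …, xk') turning T1 into T2 such that x1' = xi and {x1, …, xk} = {x1', …, xk'}. -/

import Mathlib

/-!
Common framework: rooted binary trees with leaves bijectively labeled by a
finite label set, leaf removal, restriction, the leaf-removal distance `d_LR`,
compatibility, leaf-disagreements, triplets, LPR moves, etc.
-/

universe u

/-- A rooted binary tree whose leaves carry labels from `α`. -/
inductive LTree (α : Type u) : Type u where
  | leaf : α → LTree α
  | node : LTree α → LTree α → LTree α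

namespace LTree

variable {α : Type u} [DecidableEq α]

/-- The set of leaf labels of a tree. -/
def labels : LTree α → Finset α
  | leaf a => {a}
  | node l r => labels l ∪ labels r

/-- A tree is `Good` when its leaves carry pairwise distinct labels
(i.e. the leaves are bijectively labeled). -/
def Good : LTree α → Prop
  | leaf _ => True
  | node l r => Good l ∧ Good r ∧ Disjoint (labels l) (labels r)

/-- `T` is a (rooted binary, uniquely leaf-labeled) tree on label set `𝒳`. -/
def IsTreeOn (T : LTree α) (𝒳 : Finset α) : Prop :=
  Good T ∧ labels T = 𝒳

/-- Equality of rooted trees: children of a node are unordered. -/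
inductive Iso : LTree α → LTree α → Prop
  | leaf (a : α) : Iso (leaf a) (leaf a)
  | node {l₁ r₁ l₂ r₂ : LTree α} :
      Iso l₁ l₂ → Iso r₁ r₂ → Iso (node l₁ r₁) (node l₂ r₂)
  | swap {l₁ r₁ l₂ r₂ : LTree α} :
      Iso l₁ r₂ → Iso r₁ l₂ → Iso (node l₁ r₁) (node l₂ r₂)

/-- Equality of possibly empty trees (`none` is the empty tree). -/
def OptIso : Option (LTree α) → Option (LTree α) → Prop
  | none, none => True
  | some t₁, some t₂ => Iso t₁ t₂
  | _, _ => False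

/-- Restriction `T|_S`: keep exactly the leaves with labels in `S`, suppressing
the resulting degree-two vertices and degree-one roots; the result is `none`
when no leaf survives. -/
def restrict : LTree α → Finset α → Option (LTree α)
  | leaf a, S => if a ∈ S then some (leaf a) else none
  | node l r, S =>
    match restrict l S, restrict r S with
    | some l', some r' => some (node l' r')
    | some l', none => some l'
    | none, some r' => some r'
    | none, none => none

/-- `T − X`: remove from `T` every leaf whose label lies in `X`. -/
def remove (T : LTree α) (X : Finset α) : Option (LTree α) :=
  restrict T (labels T \ X)

/-- The leaf-removal distance `d_LR(T₁,T₂)`: the minimum number of labels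
whose removal makes the two trees equal. -/
noncomputable def dLR (T₁ T₂ : LTree α) : ℕ :=
  sInf {n | ∃ X : Finset α, X ⊆ labels T₁ ∪ labels T₂ ∧ X.card = n ∧
    OptIso (remove T₁ X) (remove T₂ X)}

def labelsO : Option (LTree α) → Finset α
  | none => ∅
  | some t => labels t

def GoodO : Option (LTree α) → Prop
  | none => True
  | some t => Good t

def restrictO : Option (LTree α) → Finset α → Option (LTree α)
  | none, _ => none
  | some t, S => restrict t S

/-- A family of (possibly empty) trees is compatible if there is a single tree,
on the union of their label sets, which displays all of them. -/
def CompatibleFamO {ι : Type*} (f : ι → Option (LTree α)) : Prop :=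
  ∃ TO : Option (LTree α), GoodO TO ∧
    (↑(labelsO TO) : Set α) = (⋃ i, ↑(labelsO (f i))) ∧
    ∀ i, OptIso (restrictO TO (labelsO (f i))) (f i)

/-- A family of trees is compatible if a single tree displays all of them. -/
def CompatibleFam {ι : Type*} (𝒯 : ι → LTree α) : Prop :=
  CompatibleFamO fun i => some (𝒯 i)

/-- `X` is a leaf-disagreement for the family `𝒯`: removing `X i` from `𝒯 i`
yields a compatible family. -/
def IsLeafDisagreement {ι : Type*} (𝒯 : ι → LTree α) (X : ι → Finset α) : Prop :=
  CompatibleFamO fun i => remove (𝒯 i) (X i)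

/-- `X'` is a label-disagreement for the family `𝒯`. -/
def IsLabelDisagreement {ι : Type*} (𝒯 : ι → LTree α) (X' : Finset α) : Prop :=
  CompatibleFamO fun i => remove (𝒯 i) X'

/-- `MASTRL 𝒯`: the minimum size of a leaf-disagreement for `𝒯`. -/
noncomputable def MASTRL {t : ℕ} (𝒯 : Fin t → LTree α) : ℕ :=
  sInf {v | ∃ X : Fin t → Finset α, (∀ i, X i ⊆ labels (𝒯 i)) ∧
    (∑ i, (X i).card) = v ∧ IsLeafDisagreement 𝒯 X}

/-- The triplet `ab|c` (as a tree). -/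
def tripletTree (a b c : α) : LTree α := node (node (leaf a) (leaf b)) (leaf c)

/-- A rooted triplet: a tree with exactly three (distinctly labeled) leaves. -/
def IsTriplet (R : LTree α) : Prop := Good R ∧ (labels R).card = 3

/-- `ab|c` is a triplet of `T`, i.e. `T|_{a,b,c} = ab|c`. -/
def IsTripletOf (T : LTree α) (a b c : α) : Prop :=
  OptIso (restrict T {a, b, c}) (some (tripletTree a b c))

/-- `tr(T)`: the triplet decomposition of `T`. -/
def trSet (T : LTree α) : Set (LTree α) :=
  {R | ∃ a b c : α, R = tripletTree a b c ∧ IsTripletOf T a b c}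

/-- A set of trees is compatible: some tree on the union of the label sets
displays every member. -/
def CompatibleSet (S : Set (LTree α)) : Prop :=
  ∃ TO : Option (LTree α), GoodO TO ∧
    (↑(labelsO TO) : Set α) = (⋃ R ∈ S, ↑(labels R)) ∧
    ∀ R ∈ S, OptIso (restrictO TO (labels R)) (some R)

/-- `MINRTI ℛ`: the minimum number of triplets to delete from `ℛ` so that the
remaining triplets are compatible. -/
noncomputable def MINRTI {t : ℕ} (R : Fin t → LTree α) : ℕ :=
  sInf {m | ∃ s : Finset (Fin t), s.card = m ∧
    CompatibleFam (fun i : {i : Fin t // i ∉ s} => R i.1)}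

/-- Graft the leaf `x` at the position (edge) addressed by `p` in `T`.
The empty address grafts `x` above the root of `T` (the `⊥` case); the address
of an internal/leaf vertex `v` grafts `x` on the edge between `v` and its
parent.  `none` when the address is invalid. -/
def graftAt (x : α) : LTree α → List Bool → Option (LTree α)
  | T, [] => some (node (leaf x) T)
  | leaf _, _ :: _ => none
  | node l r, b :: p =>
    if b then (graftAt x l p).map (fun l' => node l' r)
    else (graftAt x r p).map (fun r' => node l r')

/-- `T'` is obtained from `T` by a single LPR (leaf prune-and-regraft) move on
the leaf `x`: prune `x` from `T` and regraft it, either on an edge of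
`T − {x}` or above its root. -/
def LPRStep (x : α) (T T' : LTree α) : Prop :=
  (remove T {x} = none ∧ T' = leaf x) ∨
  ∃ T₀ p, remove T {x} = some T₀ ∧ graftAt x T₀ p = some T'

/-- `TurnsInto L T T'`: the LPR sequence with (ordered) leaf list `L` turns
`T` into `T'`. -/
inductive TurnsInto : List α → LTree α → LTree α → Prop
  | nil {T T' : LTree α} : Iso T T' → TurnsInto [] T T'
  | cons {x : α} {xs : List α} {T T'' T' : LTree α} :
      LPRStep x T T'' → TurnsInto xs T'' T' → TurnsInto (x :: xs) T T'

/-- `confset(T₁,T₂)`: the collection of 3-label sets `{a,b,c}` such that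
`T₁` contains a triplet on `{a,b,c}` conflicting with a triplet of `T₂`. -/
def confset (T₁ T₂ : LTree α) : Set (Finset α) :=
  {s | ∃ a b c : α, s = {a, b, c} ∧ IsTripletOf T₁ a b c ∧
    (IsTripletOf T₂ a c b ∨ IsTripletOf T₂ b c a)}

/-- `X` is a minimal disagreement between `T₁` and `T₂`. -/
def MinimalDisagreement (T₁ T₂ : LTree α) (X : Finset α) : Prop :=
  X ⊆ labels T₁ ∪ labels T₂ ∧
  OptIso (remove T₁ X) (remove T₂ X) ∧
  ∀ X' ⊂ X, ¬ OptIso (remove T₁ X') (remove T₂ X')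

/-- `u` is (the rooted subtree hanging at) a node of `T`. -/
inductive IsSubtree : LTree α → LTree α → Prop
  | refl (T : LTree α) : IsSubtree T T
  | left {u l r : LTree α} : IsSubtree u l → IsSubtree u (node l r)
  | right {u l r : LTree α} : IsSubtree u r → IsSubtree u (node l r)

/-- `u` is the least common ancestor in `T` of the labels in `Z`. -/
def IsLCA (T : LTree α) (Z : Finset α) (u : LTree α) : Prop :=
  IsSubtree u T ∧ Z ⊆ labels u ∧
    ∀ w, IsSubtree w T → Z ⊆ labels w → IsSubtree u w

end LTree

open LTree

namespace LTree

variable {α : Type u} [DecidableEq α]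

theorem labels_nonempty (T : LTree α) : (labels T).Nonempty := by
  induction T with
  | leaf a => exact ⟨a, by simp [labels]⟩
  | node l r ihl ihr => exact ihl.mono (by simp [labels])

theorem restrict_congr {T : LTree α} {S S' : Finset α}
    (h : ∀ a ∈ labels T, (a ∈ S ↔ a ∈ S')) : restrict T S = restrict T S' := by
  induction T with
  | leaf a => simp only [restrict, h a (by simp [labels])]
  | node l r ihl ihr =>
    have h1 := ihl fun a ha => h a (by simp [labels, ha])
    have h2 := ihr fun a ha => h a (by simp [labels, ha])
    simp only [restrict, h1, h2]

theorem restrict_eq_none {T : LTree α} {S : Finset α} :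
    restrict T S = none ↔ ∀ a ∈ labels T, a ∉ S := by
  induction T with
  | leaf a => by_cases h : a ∈ S <;> simp [restrict, labels, h]
  | node l r ihl ihr =>
    cases hl : restrict l S <;> cases hr : restrict r S <;>
      simp_all [restrict, labels, hl, hr] <;>
      first
      | (rintro a ha; exact fun h => (ihl a ha h).elim)
      | (obtain ⟨w, hw, hws⟩ := ihl; exact ⟨w, Or.inl hw, hws⟩)
      | (obtain ⟨w, hw, hws⟩ := ihr; exact ⟨w, Or.inr hw, hws⟩)
      | (rintro a (ha | ha) h; exacts [ihl a ha h, ihr a ha h])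

theorem labels_restrict : ∀ {T t : LTree α} {S : Finset α},
    restrict T S = some t → labels t = labels T ∩ S := by
  intro T
  induction T with
  | leaf a =>
    intro t S h
    by_cases ha : a ∈ S
    · simp only [restrict, if_pos ha] at h
      cases h
      simp [labels, Finset.singleton_inter_of_mem ha]
    · simp [restrict, if_neg ha] at h
  | node l r ihl ihr =>
    intro t S h
    have hll : labels (node l r) ∩ S = labels l ∩ S ∪ labels r ∩ S := by
      simp [labels, Finset.union_inter_distrib_right]
    cases hl : restrict l S <;> cases hr : restrict r S <;>
        simp only [restrict, hl, hr] at h <;> cases h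
    · have h0 := restrict_eq_none.mp hl
      have : labels l ∩ S = ∅ := Finset.eq_empty_of_forall_notMem (by
        intro a ha; simp only [Finset.mem_inter] at ha; exact h0 a ha.1 ha.2)
      simp [hll, ihr hr, this]
    · have h0 := restrict_eq_none.mp hr
      have : labels r ∩ S = ∅ := Finset.eq_empty_of_forall_notMem (by
        intro a ha; simp only [Finset.mem_inter] at ha; exact h0 a ha.1 ha.2)
      simp [hll, ihl hl, this]
    · simp [hll, labels, ihl hl, ihr hr, Finset.union_inter_distrib_right]

theorem restrict_of_subset {T : LTree α} {S : Finset α} (h : labels T ⊆ S) :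
    restrict T S = some T := by
  induction T with
  | leaf a =>
    have ha : a ∈ S := h (by simp [labels])
    simp [restrict, ha]
  | node l r ihl ihr =>
    have h1 := ihl (subset_trans (by simp [labels] : labels l ⊆ labels (node l r)) h)
    have h2 := ihr (subset_trans (by simp [labels] : labels r ⊆ labels (node l r)) h)
    simp only [restrict, h1, h2]

theorem restrict_restrict (T : LTree α) (A B : Finset α) :
    restrictO (restrict T A) B = restrict T (A ∩ B) := by
  induction T with
  | leaf a =>
    by_cases hA : a ∈ A <;> by_cases hB : a ∈ B <;>
      simp [restrict, restrictO, hA, hB]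
  | node l r ihl ihr =>
    have e : restrict (node l r) (A ∩ B) =
        match restrict l (A ∩ B), restrict r (A ∩ B) with
        | some l', some r' => some (node l' r')
        | some l', none => some l'
        | none, some r' => some r'
        | none, none => none := rfl
    rw [e, ← ihl, ← ihr]
    cases hl : restrict l A with
    | none =>
      cases hr : restrict r A with
      | none => simp only [restrict, hl, hr, restrictO]
      | some w => simp only [restrict, hl, hr, restrictO]; cases restrict w B <;> rfl
    | some v =>
      cases hr : restrict r A with
      | none => simp only [restrict, hl, hr, restrictO]; cases restrict v B <;> rfl
      | some w => simp only [restrict, hl, hr, restrictO]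

theorem restrict_node (l r : LTree α) (S : Finset α) :
    restrict (node l r) S =
      match restrict l S, restrict r S with
      | some l', some r' => some (node l' r')
      | some l', none => some l'
      | none, some r' => some r'
      | none, none => none := rfl

theorem graftAt_node_true {x : α} (l r : LTree α) (p : List Bool) :
    graftAt x (node l r) (true :: p) = (graftAt x l p).map (fun l' => node l' r) := by
  simp [graftAt]

theorem graftAt_node_false {x : α} (l r : LTree α) (p : List Bool) :
    graftAt x (node l r) (false :: p) = (graftAt x r p).map (fun r' => node l r') := by
  simp [graftAt]

theorem good_restrict : ∀ {T t : LTree α} {S : Finset α},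
    Good T → restrict T S = some t → Good t := by
  intro T
  induction T with
  | leaf a =>
    intro t S _ h
    by_cases ha : a ∈ S
    · simp only [restrict, if_pos ha] at h; cases h; trivial
    · simp only [restrict, if_neg ha] at h; cases h
  | node l r ihl ihr =>
    intro t S hg h
    obtain ⟨gl, gr, hd⟩ := hg
    rw [restrict_node] at h
    cases hl : restrict l S with
    | none =>
      cases hr : restrict r S with
      | none => simp [hl, hr] at h
      | some w => rw [hl, hr] at h; cases h; exact ihr gr hr
    | some v =>
      cases hr : restrict r S with
      | none => rw [hl, hr] at h; cases h; exact ihl gl hl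
      | some w =>
        rw [hl, hr] at h; cases h
        exact ⟨ihl gl hl, ihr gr hr,
          hd.mono (by rw [labels_restrict hl]; exact Finset.inter_subset_left)
            (by rw [labels_restrict hr]; exact Finset.inter_subset_left)⟩

theorem labels_graftAt {x : α} : ∀ {T T' : LTree α} {p : List Bool},
    graftAt x T p = some T' → labels T' = insert x (labels T) := by
  intro T
  induction T with
  | leaf a =>
    intro T' p h
    cases p with
    | nil => cases h; simp [labels]
    | cons b p => simp [graftAt] at h
  | node l r ihl ihr =>
    intro T' p h
    cases p with
    | nil => cases h; simp [labels, Finset.insert_eq, -Finset.singleton_union]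
    | cons b p =>
      cases b
      · rw [graftAt_node_false, Option.map_eq_some_iff] at h
        obtain ⟨u, hu, rfl⟩ := h
        simp [labels, ihr hu, Finset.insert_eq, Finset.union_left_comm, -Finset.singleton_union]
      · rw [graftAt_node_true, Option.map_eq_some_iff] at h
        obtain ⟨u, hu, rfl⟩ := h
        simp [labels, ihl hu, Finset.insert_eq, Finset.union_assoc, -Finset.singleton_union]

theorem good_graftAt {x : α} : ∀ {T T' : LTree α} {p : List Bool},
    Good T → x ∉ labels T → graftAt x T p = some T' → Good T' := by
  intro T
  induction T with
  | leaf a =>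
    intro T' p hg hx h
    cases p with
    | nil =>
      cases h
      refine ⟨trivial, trivial, ?_⟩
      simp only [labels] at hx
      simp only [labels, Finset.disjoint_singleton]
      exact fun h => hx (by simp [h])
    | cons b p => simp [graftAt] at h
  | node l r ihl ihr =>
    intro T' p hg hx h
    obtain ⟨gl, gr, hd⟩ := hg
    have hxl : x ∉ labels l := fun hc => hx (by simp [labels, hc])
    have hxr : x ∉ labels r := fun hc => hx (by simp [labels, hc])
    cases p with
    | nil =>
      cases h
      refine ⟨trivial, ⟨gl, gr, hd⟩, ?_⟩
      simp [labels, Finset.disjoint_singleton_left, hxl, hxr]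
    | cons b p =>
      cases b
      · rw [graftAt_node_false, Option.map_eq_some_iff] at h
        obtain ⟨u, hu, rfl⟩ := h
        refine ⟨gl, ihr gr hxr hu, ?_⟩
        rw [labels_graftAt hu]
        simp [Finset.disjoint_insert_right, hd, hxl]
      · rw [graftAt_node_true, Option.map_eq_some_iff] at h
        obtain ⟨u, hu, rfl⟩ := h
        refine ⟨ihl gl hxl hu, gr, ?_⟩
        rw [labels_graftAt hu]
        simp [Finset.insert_eq, Finset.disjoint_union_left, hd,
          Finset.disjoint_singleton_left, hxr, -Finset.singleton_union]

theorem restrict_graftAt {x : α} {S : Finset α} (hx : x ∉ S) :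
    ∀ {T T' : LTree α} {p : List Bool},
    graftAt x T p = some T' → restrict T' S = restrict T S := by
  intro T
  induction T with
  | leaf a =>
    intro T' p h
    cases p with
    | nil =>
      cases h
      rw [restrict_node]
      simp only [restrict, if_neg hx]
      by_cases ha : a ∈ S <;> simp [ha]
    | cons b p => simp [graftAt] at h
  | node l r ihl ihr =>
    intro T' p h
    cases p with
    | nil =>
      cases h
      rw [restrict_node, show restrict (leaf x) S = none from by simp [restrict, hx]]
      cases hT : restrict (node l r) S <;> rfl
    | cons b p =>
      cases b
      · rw [graftAt_node_false, Option.map_eq_some_iff] at h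
        obtain ⟨u, hu, rfl⟩ := h
        rw [restrict_node, restrict_node, ihr hu]
      · rw [graftAt_node_true, Option.map_eq_some_iff] at h
        obtain ⟨u, hu, rfl⟩ := h
        rw [restrict_node, restrict_node, ihl hu]

theorem iso_refl : ∀ (T : LTree α), Iso T T
  | leaf a => Iso.leaf a
  | node l r => Iso.node (iso_refl l) (iso_refl r)

theorem iso_symm : ∀ {T S : LTree α}, Iso T S → Iso S T := by
  intro T S h
  induction h with
  | leaf a => exact Iso.leaf a
  | node h1 h2 ih1 ih2 => exact Iso.node ih1 ih2
  | swap h1 h2 ih1 ih2 => exact Iso.swap ih2 ih1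

theorem iso_labels : ∀ {T S : LTree α}, Iso T S → labels T = labels S := by
  intro T S h
  induction h with
  | leaf a => rfl
  | node h1 h2 ih1 ih2 => simp [labels, ih1, ih2]
  | swap h1 h2 ih1 ih2 => simp [labels, ih1, ih2, Finset.union_comm]

theorem iso_trans : ∀ {T S R : LTree α}, Iso T S → Iso S R → Iso T R := by
  intro T S R h1
  induction h1 generalizing R with
  | leaf a => exact fun h => h
  | node g1 g2 ih1 ih2 =>
    intro h2
    cases h2 with
    | node k1 k2 => exact Iso.node (ih1 k1) (ih2 k2)
    | swap k1 k2 => exact Iso.swap (ih1 k1) (ih2 k2)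
  | swap g1 g2 ih1 ih2 =>
    intro h2
    cases h2 with
    | node k1 k2 => exact Iso.swap (ih1 k2) (ih2 k1)
    | swap k1 k2 => exact Iso.node (ih1 k2) (ih2 k1)

theorem optIso_refl : ∀ (o : Option (LTree α)), OptIso o o
  | none => trivial
  | some t => iso_refl t

theorem optIso_symm : ∀ {o o' : Option (LTree α)}, OptIso o o' → OptIso o' o
  | none, none, _ => trivial
  | some _, some _, h => iso_symm h

theorem optIso_trans : ∀ {o o' o'' : Option (LTree α)},
    OptIso o o' → OptIso o' o'' → OptIso o o''
  | none, none, none, _, _ => trivial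
  | some _, some _, some _, h1, h2 => iso_trans h1 h2

theorem optIso_cases : ∀ {o o' : Option (LTree α)}, OptIso o o' →
    (o = none ∧ o' = none) ∨ ∃ t t', o = some t ∧ o' = some t' ∧ Iso t t'
  | none, none, _ => Or.inl ⟨rfl, rfl⟩
  | some t, some t', h => Or.inr ⟨t, t', rfl, rfl, h⟩

theorem iso_restrict {T S : LTree α} (h : Iso T S) (X : Finset α) :
    OptIso (restrict T X) (restrict S X) := by
  induction h with
  | leaf a => exact optIso_refl _
  | node h1 h2 ih1 ih2 =>
    rw [restrict_node, restrict_node]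
    rcases optIso_cases ih1 with ⟨e1, e2⟩ | ⟨t1, t2, e1, e2, hi⟩ <;>
      rcases optIso_cases ih2 with ⟨f1, f2⟩ | ⟨s1, s2, f1, f2, hj⟩ <;>
      rw [e1, e2, f1, f2]
    · trivial
    · exact hj
    · exact hi
    · exact Iso.node hi hj
  | swap h1 h2 ih1 ih2 =>
    rw [restrict_node, restrict_node]
    rcases optIso_cases ih1 with ⟨e1, e2⟩ | ⟨t1, t2, e1, e2, hi⟩ <;>
      rcases optIso_cases ih2 with ⟨f1, f2⟩ | ⟨s1, s2, f1, f2, hj⟩ <;>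
      rw [e1, e2, f1, f2]
    · trivial
    · exact hj
    · exact hi
    · exact Iso.swap hi hj

theorem remove_def (T : LTree α) (X : Finset α) :
    remove T X = restrict T (labels T \ X) := rfl

theorem labels_remove {T t : LTree α} {X : Finset α} (h : remove T X = some t) :
    labels t = labels T \ X := by
  rw [labels_restrict h]
  ext a
  simp only [Finset.mem_inter, Finset.mem_sdiff]
  tauto

theorem remove_eq_none {T : LTree α} {X : Finset α} :
    remove T X = none ↔ labels T ⊆ X := by
  rw [remove_def, restrict_eq_none]
  constructor
  · intro h a ha
    by_contra hc
    exact h a ha (Finset.mem_sdiff.mpr ⟨ha, hc⟩)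
  · intro h a _ hs
    exact (Finset.mem_sdiff.mp hs).2 (h (Finset.mem_sdiff.mp hs).1)

theorem remove_remove {T t : LTree α} {X Y : Finset α} (h : remove T X = some t) :
    remove t Y = remove T (X ∪ Y) := by
  have hl : labels t = labels T \ X := labels_remove h
  rw [remove_def, remove_def, hl]
  have := restrict_restrict T (labels T \ X) ((labels T \ X) \ Y)
  rw [remove_def] at h
  rw [h] at this
  simp only [restrictO] at this
  rw [this]
  congr 1
  ext a
  simp only [Finset.mem_inter, Finset.mem_sdiff, Finset.mem_union]
  tauto

theorem iso_remove {T S : LTree α} (h : Iso T S) (X : Finset α) :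
    OptIso (remove T X) (remove S X) := by
  rw [remove_def, remove_def, ← iso_labels h]
  exact iso_restrict h _

theorem eq_leaf_of_labels_subset {T : LTree α} {x : α}
    (hg : Good T) (h : labels T ⊆ {x}) : T = leaf x := by
  cases T with
  | leaf a =>
    have : a ∈ ({x} : Finset α) := h (by simp [labels])
    simp at this; rw [this]
  | node l r =>
    obtain ⟨gl, gr, hd⟩ := hg
    obtain ⟨a, ha⟩ := labels_nonempty l
    obtain ⟨b, hb⟩ := labels_nonempty r
    have ha' : a = x := by simpa using h (by simp [labels, ha] : a ∈ labels (node l r))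
    have hb' : b = x := by simpa using h (by simp [labels, hb] : b ∈ labels (node l r))
    subst ha'; subst hb'
    exact (Finset.disjoint_left.mp hd ha hb).elim

theorem ungraft {x : α} : ∀ {V : LTree α}, Good V → x ∈ labels V →
    (remove V {x} = none ∧ V = leaf x) ∨
    ∃ V₀ p V'', remove V {x} = some V₀ ∧ graftAt x V₀ p = some V'' ∧ Iso V'' V := by
  intro V
  induction V with
  | leaf a =>
    intro _ hx
    simp only [labels, Finset.mem_singleton] at hx
    subst hx
    left
    refine ⟨?_, rfl⟩
    rw [remove_def]
    simp [labels, restrict]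
  | node l r ihl ihr =>
    intro hg hx
    obtain ⟨gl, gr, hd⟩ := hg
    right
    have hlab : labels (node l r) = labels l ∪ labels r := rfl
    have hrem : remove (node l r) {x} =
        match restrict l (labels (node l r) \ {x}), restrict r (labels (node l r) \ {x}) with
        | some l', some r' => some (node l' r')
        | some l', none => some l'
        | none, some r' => some r'
        | none, none => none := restrict_node ..
    by_cases hxl : x ∈ labels l
    · have hxr : x ∉ labels r := Finset.disjoint_left.mp hd hxl
      have er : restrict r (labels (node l r) \ {x}) = some r := by
        apply restrict_of_subset
        intro a ha
        simp only [hlab, Finset.mem_sdiff, Finset.mem_union, Finset.mem_singleton]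
        exact ⟨Or.inr ha, fun hc => hxr (hc ▸ ha)⟩
      have el : restrict l (labels (node l r) \ {x}) = restrict l (labels l \ {x}) := by
        apply restrict_congr
        intro a ha
        simp only [hlab, Finset.mem_sdiff, Finset.mem_union, Finset.mem_singleton]
        tauto
      rcases ihl gl hxl with ⟨h1, rfl⟩ | ⟨l₀, p, l'', h1, h2, h3⟩
      · rw [remove_def] at h1
        rw [hrem, el, h1, er]
        exact ⟨r, [], node (leaf x) r, rfl, by simp [graftAt], Iso.node (iso_refl _) (iso_refl _)⟩
      · rw [remove_def] at h1
        rw [hrem, el, h1, er]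
        refine ⟨node l₀ r, true :: p, node l'' r, rfl, ?_, Iso.node h3 (iso_refl r)⟩
        rw [graftAt_node_true, h2]; rfl
    · have hxr : x ∈ labels r := by
        rcases Finset.mem_union.mp (hlab ▸ hx) with h | h
        · exact absurd h hxl
        · exact h
      have el : restrict l (labels (node l r) \ {x}) = some l := by
        apply restrict_of_subset
        intro a ha
        simp only [hlab, Finset.mem_sdiff, Finset.mem_union, Finset.mem_singleton]
        exact ⟨Or.inl ha, fun hc => hxl (hc ▸ ha)⟩
      have er : restrict r (labels (node l r) \ {x}) = restrict r (labels r \ {x}) := by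
        apply restrict_congr
        intro a ha
        simp only [hlab, Finset.mem_sdiff, Finset.mem_union, Finset.mem_singleton]
        tauto
      rcases ihr gr hxr with ⟨h1, rfl⟩ | ⟨r₀, p, r'', h1, h2, h3⟩
      · rw [remove_def] at h1
        rw [hrem, el, er, h1]
        exact ⟨l, [], node (leaf x) l, rfl, by simp [graftAt], Iso.swap (iso_refl _) (iso_refl _)⟩
      · rw [remove_def] at h1
        rw [hrem, el, er, h1]
        refine ⟨node l r₀, false :: p, node l r'', rfl, ?_, Iso.node (iso_refl l) h3⟩
        rw [graftAt_node_false, h2]; rfl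

theorem graftAt_nil {x : α} (T : LTree α) :
    graftAt x T [] = some (node (leaf x) T) := by
  cases T <;> rfl

theorem graft_iso {x : α} : ∀ {U V : LTree α}, Iso U V →
    ∀ {p : List Bool} {D : LTree α}, graftAt x V p = some D →
    ∃ q D', graftAt x U q = some D' ∧ Iso D' D := by
  intro U V h
  induction h with
  | leaf a =>
    intro p D hD
    cases p with
    | nil =>
      rw [graftAt_nil] at hD; cases hD
      exact ⟨[], _, graftAt_nil _, iso_refl _⟩
    | cons b p => simp [graftAt] at hD
  | @node l₁ r₁ l₂ r₂ h1 h2 ih1 ih2 =>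
    intro p D hD
    cases p with
    | nil =>
      rw [graftAt_nil] at hD; cases hD
      exact ⟨[], _, graftAt_nil _, Iso.node (iso_refl _) (Iso.node h1 h2)⟩
    | cons b p =>
      cases b
      · rw [graftAt_node_false, Option.map_eq_some_iff] at hD
        obtain ⟨d, hd, rfl⟩ := hD
        obtain ⟨q, D', hq, hiso⟩ := ih2 hd
        refine ⟨false :: q, node l₁ D', ?_, Iso.node h1 hiso⟩
        rw [graftAt_node_false, hq]; rfl
      · rw [graftAt_node_true, Option.map_eq_some_iff] at hD
        obtain ⟨d, hd, rfl⟩ := hD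
        obtain ⟨q, D', hq, hiso⟩ := ih1 hd
        refine ⟨true :: q, node D' r₁, ?_, Iso.node hiso h2⟩
        rw [graftAt_node_true, hq]; rfl
  | @swap l₁ r₁ l₂ r₂ h1 h2 ih1 ih2 =>
    intro p D hD
    cases p with
    | nil =>
      rw [graftAt_nil] at hD; cases hD
      exact ⟨[], _, graftAt_nil _, Iso.node (iso_refl _) (Iso.swap h1 h2)⟩
    | cons b p =>
      cases b
      · -- graft into r₂, mirror into l₁ (since Iso l₁ r₂)
        rw [graftAt_node_false, Option.map_eq_some_iff] at hD
        obtain ⟨d, hd, rfl⟩ := hD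
        obtain ⟨q, D', hq, hiso⟩ := ih1 hd
        refine ⟨true :: q, node D' r₁, ?_, Iso.swap hiso h2⟩
        rw [graftAt_node_true, hq]; rfl
      · rw [graftAt_node_true, Option.map_eq_some_iff] at hD
        obtain ⟨d, hd, rfl⟩ := hD
        obtain ⟨q, D', hq, hiso⟩ := ih2 hd
        refine ⟨false :: q, node l₁ D', ?_, Iso.swap h1 hiso⟩
        rw [graftAt_node_false, hq]; rfl

theorem lift {x : α} : ∀ {U : LTree α} {S : Finset α} {C D : LTree α} {p : List Bool},
    x ∉ labels U → restrict U S = some C → graftAt x C p = some D →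
    ∃ q E, graftAt x U q = some E ∧ restrict E (insert x S) = some D := by
  intro U
  induction U with
  | leaf a =>
    intro S C D p hx hC hD
    by_cases ha : a ∈ S
    · simp only [restrict, if_pos ha] at hC; cases hC
      cases p with
      | nil =>
        rw [graftAt_nil] at hD; cases hD
        refine ⟨[], _, graftAt_nil _, ?_⟩
        have hxa : x ≠ a := by
          intro hc; exact hx (by simp [labels, hc])
        rw [restrict_node]
        simp [restrict, ha, Finset.mem_insert]
      | cons b p => simp [graftAt] at hD
    · simp only [restrict, if_neg ha] at hC; cases hC
  | node u₁ u₂ ih1 ih2 =>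
    intro S C D p hx hC hD
    have hx1 : x ∉ labels u₁ := fun hc => hx (by simp [labels, hc])
    have hx2 : x ∉ labels u₂ := fun hc => hx (by simp [labels, hc])
    rw [restrict_node] at hC
    cases h1 : restrict u₁ S with
    | none =>
      cases h2 : restrict u₂ S with
      | none => rw [h1, h2] at hC; cases hC
      | some c₂ =>
        rw [h1, h2] at hC; cases hC
        obtain ⟨q, E, hq, hE⟩ := ih2 hx2 h2 hD
        refine ⟨false :: q, node u₁ E, ?_, ?_⟩
        · rw [graftAt_node_false, hq]; rfl
        · rw [restrict_node, hE]
          have : restrict u₁ (insert x S) = none := by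
            rw [show restrict u₁ (insert x S) = restrict u₁ S from
              restrict_congr fun a ha => by
                simp only [Finset.mem_insert]
                exact ⟨fun h => h.elim (fun h => absurd (h ▸ ha) hx1) id, Or.inr⟩, h1]
          rw [this]
    | some c₁ =>
      cases h2 : restrict u₂ S with
      | none =>
        rw [h1, h2] at hC; cases hC
        obtain ⟨q, E, hq, hE⟩ := ih1 hx1 h1 hD
        refine ⟨true :: q, node E u₂, ?_, ?_⟩
        · rw [graftAt_node_true, hq]; rfl
        · rw [restrict_node, hE]
          have : restrict u₂ (insert x S) = none := by
            rw [show restrict u₂ (insert x S) = restrict u₂ S from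
              restrict_congr fun a ha => by
                simp only [Finset.mem_insert]
                exact ⟨fun h => h.elim (fun h => absurd (h ▸ ha) hx2) id, Or.inr⟩, h2]
          rw [this]
      | some c₂ =>
        rw [h1, h2] at hC; cases hC
        cases p with
        | nil =>
          rw [graftAt_nil] at hD; cases hD
          refine ⟨[], _, graftAt_nil _, ?_⟩
          rw [restrict_node]
          have e0 : restrict (leaf x) (insert x S) = some (leaf x) := by
            simp [restrict]
          have e1 : restrict (node u₁ u₂) (insert x S) = restrict (node u₁ u₂) S := by
            apply restrict_congr
            intro a ha
            simp only [Finset.mem_insert]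
            have hax : a ≠ x := fun hc => hx (hc ▸ ha)
            exact ⟨fun h => h.elim (fun h => absurd h hax) id, Or.inr⟩
          rw [e0, e1, restrict_node, h1, h2]
        | cons b p =>
          cases b
          · rw [graftAt_node_false, Option.map_eq_some_iff] at hD
            obtain ⟨d, hd, rfl⟩ := hD
            obtain ⟨q, E, hq, hE⟩ := ih2 hx2 h2 hd
            refine ⟨false :: q, node u₁ E, ?_, ?_⟩
            · rw [graftAt_node_false, hq]; rfl
            · have e1 : restrict u₁ (insert x S) = some c₁ := by
                rw [show restrict u₁ (insert x S) = restrict u₁ S from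
                  restrict_congr fun a ha => by
                    simp only [Finset.mem_insert]
                    exact ⟨fun h => h.elim (fun h => absurd (h ▸ ha) hx1) id, Or.inr⟩, h1]
              rw [restrict_node, e1, hE]
          · rw [graftAt_node_true, Option.map_eq_some_iff] at hD
            obtain ⟨d, hd, rfl⟩ := hD
            obtain ⟨q, E, hq, hE⟩ := ih1 hx1 h1 hd
            refine ⟨true :: q, node E u₂, ?_, ?_⟩
            · rw [graftAt_node_true, hq]; rfl
            · have e2 : restrict u₂ (insert x S) = some c₂ := by
                rw [show restrict u₂ (insert x S) = restrict u₂ S from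
                  restrict_congr fun a ha => by
                    simp only [Finset.mem_insert]
                    exact ⟨fun h => h.elim (fun h => absurd (h ▸ ha) hx2) id, Or.inr⟩, h2]
              rw [restrict_node, e2, hE]

theorem lpr_labels {x : α} {T T' : LTree α} (h : LPRStep x T T') :
    labels T' = insert x (labels T) := by
  rcases h with ⟨h1, rfl⟩ | ⟨T₀, p, h1, h2⟩
  · have : labels T ⊆ {x} := by
      rw [remove_def] at h1
      have h0 := restrict_eq_none.mp h1
      intro a ha
      by_contra hc
      exact h0 a ha (Finset.mem_sdiff.mpr ⟨ha, hc⟩)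
    obtain ⟨a, ha⟩ := labels_nonempty T
    have hax : a = x := by simpa using this ha
    have : labels T = {x} := Finset.Subset.antisymm ‹labels T ⊆ {x}›
      (Finset.singleton_subset_iff.mpr (hax ▸ ha))
    simp [labels, this]
  · have hT₀ : labels T₀ = labels T \ {x} := labels_remove h1
    rw [labels_graftAt h2, hT₀]
    ext a
    simp only [Finset.mem_insert, Finset.mem_sdiff, Finset.mem_singleton]
    tauto

theorem lpr_good {x : α} {T T' : LTree α} (h : LPRStep x T T') (hg : Good T) :
    Good T' := by
  rcases h with ⟨h1, rfl⟩ | ⟨T₀, p, h1, h2⟩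
  · trivial
  · have hT₀ : labels T₀ = labels T \ {x} := labels_remove h1
    have hxT : x ∉ labels T₀ := by simp [hT₀]
    exact good_graftAt (good_restrict hg h1) hxT h2

theorem lpr_remove {x : α} {T T' : LTree α} (h : LPRStep x T T')
    {X : Finset α} (hx : x ∈ X) : remove T' X = remove T X := by
  have hlab := lpr_labels h
  rcases h with ⟨h1, rfl⟩ | ⟨T₀, p, h1, h2⟩
  · have hTx : labels T ⊆ {x} := by
      have h0 := restrict_eq_none.mp h1
      intro a ha
      by_contra hc
      exact h0 a ha (Finset.mem_sdiff.mpr ⟨ha, hc⟩)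
    rw [remove_def, remove_def]
    rw [restrict_eq_none.mpr, restrict_eq_none.mpr]
    · intro a ha hs
      exact (Finset.mem_sdiff.mp hs).2 (by
        have := hTx ha; simp at this; simpa [this] using hx)
    · intro a ha hs
      have : a = x := by simpa [labels] using ha
      exact (Finset.mem_sdiff.mp hs).2 (this ▸ hx)
  · have hT₀ : labels T₀ = labels T \ {x} := labels_remove h1
    have e1 : labels T' \ X = labels T \ X := by
      rw [hlab]; ext a
      simp only [Finset.mem_sdiff, Finset.mem_insert]
      constructor
      · rintro ⟨h | h, hn⟩
        · exact absurd (h ▸ hx) hn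
        · exact ⟨h, hn⟩
      · rintro ⟨h, hn⟩; exact ⟨Or.inr h, hn⟩
    rw [remove_def, e1, restrict_graftAt (S := labels T \ X)
      (by simp [hx] : x ∉ labels T \ X) h2]
    have := restrict_restrict T (labels T \ {x}) (labels T \ X)
    rw [remove_def] at h1
    rw [h1] at this
    simp only [restrictO] at this
    rw [this, remove_def]
    congr 1
    ext a
    simp only [Finset.mem_inter, Finset.mem_sdiff, Finset.mem_singleton]
    constructor
    · rintro ⟨⟨ha, _⟩, _, hn⟩; exact ⟨ha, hn⟩
    · rintro ⟨ha, hn⟩; exact ⟨⟨ha, fun hc => hn (hc ▸ hx)⟩, ha, hn⟩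

theorem turnsInto_labels : ∀ {L : List α} {T T' : LTree α},
    TurnsInto L T T' → labels T' = labels T ∪ L.toFinset := by
  intro L T T' h
  induction h with
  | nil hi => simp [← iso_labels hi]
  | @cons x xs T T'' T' hstep _ ih =>
    rw [ih, lpr_labels hstep]
    ext a
    simp only [Finset.mem_union, Finset.mem_insert, List.toFinset_cons]
    tauto

theorem turnsInto_remove : ∀ {L : List α} {T T' : LTree α} {X : Finset α},
    TurnsInto L T T' → (∀ y ∈ L, y ∈ X) →
    OptIso (remove T X) (remove T' X) := by
  intro L T T' X h
  induction h with
  | nil hi => exact fun _ => iso_remove hi X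
  | @cons x xs T T'' T' hstep _ ih =>
    intro hmem
    rw [← lpr_remove hstep (hmem x (by simp))]
    exact ih fun y hy => hmem y (by simp [hy])

theorem insert_sdiff_self_of_mem {𝒳 : Finset α} {x : α} (hx : x ∈ 𝒳) :
    insert x (𝒳 \ {x}) = 𝒳 := by
  ext a
  simp only [Finset.mem_insert, Finset.mem_sdiff, Finset.mem_singleton]
  constructor
  · rintro (rfl | ⟨h, _⟩) <;> [exact hx; exact h]
  · intro h
    by_cases hax : a = x
    · exact Or.inl hax
    · exact Or.inr ⟨h, hax⟩

theorem build {𝒳 : Finset α} {T₂ : LTree α} (g₂ : Good T₂) (l₂ : labels T₂ = 𝒳) :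
    ∀ (M : List α) (W : LTree α), Good W → labels W = 𝒳 →
    (∀ y ∈ M, y ∈ 𝒳) →
    OptIso (remove W M.toFinset) (remove T₂ M.toFinset) → TurnsInto M W T₂ := by
  intro M
  induction M with
  | nil =>
    intro W gW lW _ hIso
    rw [List.toFinset_nil, remove_def, remove_def, Finset.sdiff_empty, Finset.sdiff_empty,
      restrict_of_subset (Finset.Subset.refl _), restrict_of_subset (Finset.Subset.refl _)]
      at hIso
    exact TurnsInto.nil hIso
  | cons x M' ih =>
    intro W gW lW hmem hIso
    have hx𝒳 : x ∈ 𝒳 := hmem x (by simp)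
    have hmem' : ∀ y ∈ M', y ∈ 𝒳 := fun y hy => hmem y (by simp [hy])
    by_cases hmm : x ∈ M'.toFinset
    · -- dummy move
      have ht : (x :: M').toFinset = M'.toFinset := by
        rw [List.toFinset_cons, Finset.insert_eq_self.mpr hmm]
      rw [ht] at hIso
      obtain ⟨W', hstep⟩ : ∃ W', LPRStep x W W' := by
        cases hr : remove W {x} with
        | none => exact ⟨leaf x, Or.inl ⟨hr, rfl⟩⟩
        | some W₀ => exact ⟨node (leaf x) W₀, Or.inr ⟨W₀, [], hr, graftAt_nil _⟩⟩
      refine TurnsInto.cons hstep (ih W' (lpr_good hstep gW) ?_ hmem' ?_)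
      · rw [lpr_labels hstep, lW, Finset.insert_eq_self.mpr hx𝒳]
      · rw [lpr_remove hstep hmm]; exact hIso
    · -- real move
      have htf : (x :: M').toFinset = insert x M'.toFinset := by
        rw [List.toFinset_cons]
      rw [htf] at hIso
      cases hV : remove T₂ M'.toFinset with
      | none =>
        exact absurd ((remove_eq_none.mp hV) (l₂ ▸ hx𝒳)) hmm
      | some V₁ =>
        have gV₁ : Good V₁ := good_restrict g₂ hV
        have lV₁ : labels V₁ = 𝒳 \ M'.toFinset := by rw [labels_remove hV, l₂]
        have hxV₁ : x ∈ labels V₁ := by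
          rw [lV₁]; exact Finset.mem_sdiff.mpr ⟨hx𝒳, hmm⟩
        have hVx : remove V₁ {x} = remove T₂ (insert x M'.toFinset) := by
          rw [remove_remove hV]
          congr 1
          ext a
          simp only [Finset.mem_union, Finset.mem_insert, Finset.mem_singleton]
          tauto
        rcases ungraft gV₁ hxV₁ with ⟨h1, rfl⟩ | ⟨V₀, p, V'', h1, h2, h3⟩
        · -- degenerate: V₁ = leaf x
          have hT2X : remove T₂ (insert x M'.toFinset) = none := by rw [← hVx, h1]
          have hWX : remove W (insert x M'.toFinset) = none := by
            rcases optIso_cases hIso with ⟨e1, _⟩ | ⟨t1, t2, e1, e2, _⟩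
            · exact e1
            · rw [hT2X] at e2; cases e2
          have hW𝒳 : 𝒳 ⊆ insert x M'.toFinset := by
            rw [← lW]; exact remove_eq_none.mp hWX
          cases hr : remove W {x} with
          | none =>
            have hWleaf : W = leaf x :=
              eq_leaf_of_labels_subset gW (remove_eq_none.mp hr)
            subst hWleaf
            refine TurnsInto.cons (Or.inl ⟨hr, rfl⟩) (ih (leaf x) trivial lW hmem' ?_)
            rw [hV]
            have : remove (leaf x) M'.toFinset = some (leaf x) := by
              rw [remove_def]
              have e : labels (leaf x) \ M'.toFinset = {x} := by
                ext a
                simp only [labels, Finset.mem_sdiff, Finset.mem_singleton]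
                exact ⟨fun h => h.1, fun h => ⟨h, h ▸ hmm⟩⟩
              rw [e]
              exact restrict_of_subset (by simp [labels])
            rw [this]
            exact iso_refl _
          | some W₀ =>
            have hstep : LPRStep x W (node (leaf x) W₀) :=
              Or.inr ⟨W₀, [], hr, graftAt_nil _⟩
            refine TurnsInto.cons hstep (ih _ (lpr_good hstep gW) ?_ hmem' ?_)
            · rw [lpr_labels hstep, lW, Finset.insert_eq_self.mpr hx𝒳]
            · rw [hV]
              have lW₀ : labels W₀ = 𝒳 \ {x} := by rw [labels_remove hr, lW]
              have hxW₀ : x ∉ labels W₀ := by simp [lW₀]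
              have hlabs : labels (node (leaf x) W₀) = insert x (labels W₀) := by
                simp [labels, Finset.insert_eq, -Finset.singleton_union]
              have e : labels (node (leaf x) W₀) \ M'.toFinset = {x} := by
                rw [hlabs, lW₀]
                ext a
                simp only [Finset.mem_sdiff, Finset.mem_insert, Finset.mem_singleton]
                constructor
                · rintro ⟨rfl | ⟨ha, hax⟩, hn⟩
                  · rfl
                  · rcases Finset.mem_insert.mp (hW𝒳 ha) with h | h
                    · exact h
                    · exact absurd h hn
                · rintro rfl
                  exact ⟨Or.inl rfl, hmm⟩
              rw [remove_def, e, restrict_node]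
              rw [show restrict (leaf x) {x} = some (leaf x) from by simp [restrict]]
              rw [show restrict W₀ {x} = none from restrict_eq_none.mpr
                (fun a ha hs => hxW₀ (by rwa [← Finset.mem_singleton.mp hs]))]
              exact iso_refl _
        · -- main case
          have hT2X : remove T₂ (insert x M'.toFinset) = some V₀ := by rw [← hVx, h1]
          obtain ⟨U', hU', hIsoU⟩ :
              ∃ U', remove W (insert x M'.toFinset) = some U' ∧ Iso U' V₀ := by
            rcases optIso_cases hIso with ⟨e1, e2⟩ | ⟨t1, t2, e1, e2, hi⟩
            · rw [hT2X] at e2; cases e2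
            · rw [hT2X] at e2; cases e2; exact ⟨t1, e1, hi⟩
          cases hr : remove W {x} with
          | none =>
            exfalso
            have : remove W (insert x M'.toFinset) = none :=
              remove_eq_none.mpr ((remove_eq_none.mp hr).trans (by
                intro a ha; simp only [Finset.mem_singleton] at ha; simp [ha]))
            rw [hU'] at this; cases this
          | some W₀ =>
            have gW₀ : Good W₀ := good_restrict gW hr
            have lW₀ : labels W₀ = 𝒳 \ {x} := by rw [labels_remove hr, lW]
            have hxW₀ : x ∉ labels W₀ := by simp [lW₀]
            have hrem' : remove W₀ M'.toFinset = some U' := by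
              rw [remove_remove hr, show ({x} ∪ M'.toFinset) = insert x M'.toFinset from by
                ext a; simp, hU']
            obtain ⟨q0, D', hq0, hD'⟩ := graft_iso hIsoU h2
            obtain ⟨q, E, hqE, hrestr⟩ := lift hxW₀ (remove_def W₀ M'.toFinset ▸ hrem') hq0
            have hstep : LPRStep x W E := Or.inr ⟨W₀, q, hr, hqE⟩
            refine TurnsInto.cons hstep (ih E (lpr_good hstep gW) ?_ hmem' ?_)
            · rw [lpr_labels hstep, lW, Finset.insert_eq_self.mpr hx𝒳]
            · rw [hV]
              have lE : labels E = insert x (labels W₀) := labels_graftAt hqE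
              have e : labels E \ M'.toFinset = insert x (labels W₀ \ M'.toFinset) := by
                rw [lE]
                ext a
                simp only [Finset.mem_sdiff, Finset.mem_insert]
                constructor
                · rintro ⟨rfl | ha, hn⟩
                  · exact Or.inl rfl
                  · exact Or.inr ⟨ha, hn⟩
                · rintro (rfl | ⟨ha, hn⟩)
                  · exact ⟨Or.inl rfl, hmm⟩
                  · exact ⟨Or.inr ha, hn⟩
              rw [remove_def, e, hrestr]
              exact iso_trans hD' h3

end LTree


/-- Lemma 13 of the paper.  If an LPR sequence
`L = (x₁,…,x_k)` turns `T₁` into `T₂`, then for any `i ∈ [k]` there is an LPR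
sequence `L' = (x₁',…,x_k')` turning `T₁` into `T₂` with `x₁' = x_i` and
`{x₁,…,x_k} = {x₁',…,x_k'}`. -/
theorem lpr_sequence_reorder {α : Type u} [DecidableEq α] (𝒳 : Finset α)
    (T₁ T₂ : LTree α) (h₁ : IsTreeOn T₁ 𝒳) (h₂ : IsTreeOn T₂ 𝒳)
    (L : List α) (hL : TurnsInto L T₁ T₂) (i : Fin L.length) :
    ∃ L' : List α, TurnsInto L' T₁ T₂ ∧ L'.length = L.length ∧
      L'.head? = some (L.get i) ∧ L'.toFinset = L.toFinset := by
  obtain ⟨g₁, l₁⟩ := h₁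
  obtain ⟨g₂, l₂⟩ := h₂
  set L' : List α := L.get i :: L.eraseIdx i with hL'
  have hperm : List.Perm L' L := by
    rw [hL', List.eraseIdx_eq_take_drop_succ]
    conv_rhs => rw [← List.take_append_drop i L,
      List.drop_eq_getElem_cons i.isLt]
    exact (List.perm_middle).symm
  have htf : L'.toFinset = L.toFinset := List.toFinset_eq_of_perm _ _ hperm
  have hF : L.toFinset ⊆ 𝒳 := by
    have := turnsInto_labels hL
    rw [l₁, l₂] at this
    intro a ha
    rw [this]
    exact Finset.mem_union_right _ ha
  refine ⟨L', ?_, hperm.length_eq, rfl, htf⟩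
  apply build g₂ l₂ L' T₁ g₁ l₁
  · intro y hy
    exact hF (htf ▸ List.mem_toFinset.mpr hy)
  · rw [htf]
    exact turnsInto_remove hL fun y hy => List.mem_toFinset.mpr hy
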